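/- Let 0 < a_1 ≤ a_2, K = [a_1,a_2], φ(t) = (t, t², t³), L = φ(K) ⊆ ℝ³, and Λ = convexHull(L). Let c = (0, c_2, c_3) and q = (0, q_2, q_3) in ℝ³ with q_3 ≠ 0, −q_2/q_3 < 0, and c_2 − c_3·(q_2/q_3) < 0. Then for every η ∈ ℝ the function m ↦ (c + ηq)·m has exactly one minimizer over L, and consequently for every ξ ∈ ℝ such that the set S_ξ = {m ∈ Λ : q·m = ξ} is nonempty, every point of S_ξ at which m ↦ c·m attains its minimum over S_ξ belongs to L. -/

import Mathlib

open Matrix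

private lemma key9 (A B s t : ℝ) (hA : B ≤ 0 → A < 0) (hs : 0 < s) (hst : s < t)
    (h1 : A*s^2+B*s^3 ≤ A*t^2+B*t^3) (h2 : A*t^2+B*t^3 ≤ A*s^2+B*s^3)
    (h3 : A*s^2+B*s^3 ≤ A*((s+t)/2)^2+B*((s+t)/2)^3) : False := by
  have ht : 0 < t := hs.trans hst
  rcases le_or_gt B 0 with hB | hB
  · have hA' := hA hB
    have e1 : A*(t^2-s^2) < 0 := mul_neg_of_neg_of_pos hA' (by nlinarith)
    have e2 : B*(t^3-s^3) ≤ 0 := mul_nonpos_of_nonpos_of_nonneg hB (by nlinarith)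
    nlinarith
  · set u : ℝ := (s+t)/2 with hu
    have hsu : s < u := by rw [hu]; linarith
    have hut : u < t := by rw [hu]; linarith
    have hupos : 0 < u := hs.trans hsu
    have hgst : A*(s+t) + B*(s^2+s*t+t^2) = 0 := by
      have heq : A*s^2+B*s^3 = A*t^2+B*t^3 := le_antisymm h1 h2
      have hne : t - s ≠ 0 := sub_ne_zero.2 hst.ne'
      have : (t-s) * (A*(s+t) + B*(s^2+s*t+t^2)) = 0 := by linear_combination -heq
      rcases mul_eq_zero.1 this with h | h
      · exact absurd h hne
      · exact h
    have hgsu : 0 ≤ A*(s+u) + B*(s^2+s*u+u^2) := by nlinarith [sub_pos.2 hsu]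
    have hgut : A*(u+t) + B*(u^2+u*t+t^2) ≤ 0 := by nlinarith [sub_pos.2 hut]
    have hP : A + B*(s+u+t) ≤ 0 := by
      have : (t-s) * (A + B*(s+u+t)) ≤ 0 := by nlinarith
      nlinarith [sub_pos.2 hst]
    nlinarith [mul_pos hs hupos, mul_pos hupos ht, mul_pos hs ht,
      mul_pos hB (mul_pos hs hupos), mul_pos hB (mul_pos hupos ht),
      mul_pos hB (mul_pos hs ht), mul_pos (mul_pos hs hupos) ht]

private lemma part1' (a1 a2 : ℝ) (ha1 : 0 < a1) (ha : a1 ≤ a2) (A B : ℝ) (hA : B ≤ 0 → A < 0) :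
    ∃ t0 ∈ Set.Icc a1 a2, (∀ t ∈ Set.Icc a1 a2, A*t0^2+B*t0^3 ≤ A*t^2+B*t^3) ∧
      ∀ t' ∈ Set.Icc a1 a2, (∀ t ∈ Set.Icc a1 a2, A*t'^2+B*t'^3 ≤ A*t^2+B*t^3) → t' = t0 := by
  obtain ⟨t0, ht0, hmin⟩ := isCompact_Icc.exists_isMinOn (Set.nonempty_Icc.2 ha)
    (Continuous.continuousOn (by fun_prop : Continuous fun t : ℝ => A*t^2+B*t^3))
  refine ⟨t0, ht0, fun t ht => hmin ht, fun t' ht' hmin' => ?_⟩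
  by_contra hne
  have e1 : A*t0^2+B*t0^3 ≤ A*t'^2+B*t'^3 := hmin ht'
  have e2 : A*t'^2+B*t'^3 ≤ A*t0^2+B*t0^3 := hmin' t0 ht0
  rcases lt_or_gt_of_ne hne with h | h
  · have hm : (t'+t0)/2 ∈ Set.Icc a1 a2 :=
      ⟨by rcases ht' with ⟨h1',_⟩; rcases ht0 with ⟨h1,h2⟩; linarith,
       by rcases ht' with ⟨_,h2'⟩; rcases ht0 with ⟨h1,h2⟩; linarith⟩
    exact key9 A B t' t0 hA (lt_of_lt_of_le ha1 ht'.1) h e2 e1 (le_trans e2 (hmin hm))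
  · have hm : (t0+t')/2 ∈ Set.Icc a1 a2 :=
      ⟨by rcases ht' with ⟨h1',_⟩; rcases ht0 with ⟨h1,h2⟩; linarith,
       by rcases ht' with ⟨_,h2'⟩; rcases ht0 with ⟨h1,h2⟩; linarith⟩
    exact key9 A B t0 t' hA (lt_of_lt_of_le ha1 ht0.1) h e1 e2 (hmin hm)

private lemma dot_lin9 (v : Fin 3 → ℝ) : IsLinearMap ℝ (fun x : Fin 3 → ℝ => v ⬝ᵥ x) :=
  ⟨fun a b => dotProduct_add v a b, fun r a => by simp [dotProduct_smul]⟩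

private lemma hull_lb9 (s : Set (Fin 3 → ℝ)) (v : Fin 3 → ℝ) (μ : ℝ) (h : ∀ x ∈ s, μ ≤ v ⬝ᵥ x) :
    ∀ x ∈ convexHull ℝ s, μ ≤ v ⬝ᵥ x :=
  fun _x hx => convexHull_min h (convex_halfSpace_ge (dot_lin9 v) μ) hx

private lemma hull_ub9 (s : Set (Fin 3 → ℝ)) (v : Fin 3 → ℝ) (μ : ℝ) (h : ∀ x ∈ s, v ⬝ᵥ x ≤ μ) :
    ∀ x ∈ convexHull ℝ s, v ⬝ᵥ x ≤ μ :=
  fun _x hx => convexHull_min h (convex_halfSpace_le (dot_lin9 v) μ) hx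

private lemma dot_sum9 {ι : Type} (T : Finset ι) (v : Fin 3 → ℝ) (w : ι → ℝ) (z : ι → Fin 3 → ℝ) :
    v ⬝ᵥ (∑ i ∈ T, w i • z i) = ∑ i ∈ T, w i * (v ⬝ᵥ z i) := by
  simp only [dotProduct, Finset.sum_apply, Pi.smul_apply, smul_eq_mul, Finset.mul_sum]
  rw [Finset.sum_comm]
  exact Finset.sum_congr rfl fun i _ => Finset.sum_congr rfl fun j _ => by ring

theorem stmt_9
    (a1 a2 : ℝ) (ha1 : 0 < a1) (ha : a1 ≤ a2)
    (φ : ℝ → Fin 3 → ℝ) (hφ : φ = fun t => ![t, t ^ 2, t ^ 3])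
    (c2 c3 q2 q3 : ℝ)
    (c q : Fin 3 → ℝ) (hc : c = ![0, c2, c3]) (hq : q = ![0, q2, q3])
    (hq3 : q3 ≠ 0)
    (h1 : -(q2 / q3) < 0)
    (h2 : c2 - c3 * (q2 / q3) < 0) :
    (∀ η : ℝ, ∃! m0 : Fin 3 → ℝ, m0 ∈ φ '' Set.Icc a1 a2 ∧
      ∀ m' ∈ φ '' Set.Icc a1 a2, (c + η • q) ⬝ᵥ m0 ≤ (c + η • q) ⬝ᵥ m') ∧
    ∀ ξ : ℝ,
      ({mm ∈ convexHull ℝ (φ '' Set.Icc a1 a2) | q ⬝ᵥ mm = ξ}).Nonempty →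
      ∀ m0 ∈ {mm ∈ convexHull ℝ (φ '' Set.Icc a1 a2) | q ⬝ᵥ mm = ξ},
        (∀ m' ∈ {mm ∈ convexHull ℝ (φ '' Set.Icc a1 a2) | q ⬝ᵥ mm = ξ},
          c ⬝ᵥ m0 ≤ c ⬝ᵥ m') →
        m0 ∈ φ '' Set.Icc a1 a2 := by
  have hrpos : 0 < q2 / q3 := by linarith
  have hq2r : q2 / q3 * q3 = q2 := div_mul_cancel₀ q2 hq3
  -- dot product computations
  have hdot : ∀ η t : ℝ, (c + η • q) ⬝ᵥ φ t = (c2+η*q2)*t^2 + (c3+η*q3)*t^3 := by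
    intro η t
    subst hφ hc hq
    simp [dotProduct, Fin.sum_univ_three]
    try ring
  have hqdot : ∀ t : ℝ, q ⬝ᵥ φ t = q2*t^2 + q3*t^3 := by
    intro t
    subst hφ hq
    simp [dotProduct, Fin.sum_univ_three]
    try ring
  have hcdot : ∀ t : ℝ, c ⬝ᵥ φ t = c2*t^2 + c3*t^3 := by
    intro t
    subst hφ hc
    simp [dotProduct, Fin.sum_univ_three]
    try ring
  have hφinj : ∀ s t : ℝ, φ s = φ t → s = t := by
    intro s t hst
    subst hφ
    have := congrFun hst 0
    simpa using this
  have hmem : ∀ t : ℝ, t ∈ Set.Icc a1 a2 → φ t ∈ φ '' Set.Icc a1 a2 :=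
    fun t ht => ⟨t, ht, rfl⟩
  -- key sign condition
  have hABlt : ∀ η : ℝ, (c2+η*q2) - (q2/q3) * (c3+η*q3) < 0 := by
    intro η
    have : (c2+η*q2) - (q2/q3) * (c3+η*q3) = c2 - c3 * (q2/q3) := by
      field_simp
      ring
    rw [this]; exact h2
  have hAneg : ∀ η : ℝ, c3+η*q3 ≤ 0 → c2+η*q2 < 0 := by
    intro η hB
    have h3 := hABlt η
    nlinarith
  constructor
  · -- Part 1
    intro η
    obtain ⟨t0, ht0, hmin, huniq⟩ := part1' a1 a2 ha1 ha (c2+η*q2) (c3+η*q3) (hAneg η)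
    refine ⟨φ t0, ⟨hmem t0 ht0, ?_⟩, ?_⟩
    · rintro m' ⟨t, ht, rfl⟩
      rw [hdot, hdot]
      exact hmin t ht
    · rintro m' ⟨⟨t', ht', rfl⟩, hmin'⟩
      have ht'0 : t' = t0 := by
        apply huniq t' ht'
        intro t ht
        have := hmin' (φ t) (hmem t ht)
        rwa [hdot, hdot] at this
      rw [ht'0]
  · -- Part 2
    intro ξ hne m0 hm0 hminS
    obtain ⟨mm, hmmΛ, hmmξ⟩ := hne
    -- ψ and its extrema on Icc
    have hψcont : Continuous fun t : ℝ => q2*t^2+q3*t^3 := by fun_prop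
    obtain ⟨tmin, htmin, hψmin⟩ := isCompact_Icc.exists_isMinOn (Set.nonempty_Icc.2 ha)
      hψcont.continuousOn
    obtain ⟨tmax, htmax, hψmax⟩ := isCompact_Icc.exists_isMaxOn (Set.nonempty_Icc.2 ha)
      hψcont.continuousOn
    have hlo : q2*tmin^2+q3*tmin^3 ≤ ξ := by
      rw [← hmmξ]
      refine hull_lb9 _ _ _ ?_ mm hmmΛ
      rintro x ⟨t, ht, rfl⟩
      rw [hqdot]
      exact hψmin ht
    have hhi : ξ ≤ q2*tmax^2+q3*tmax^3 := by
      rw [← hmmξ]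
      refine hull_ub9 _ _ _ ?_ mm hmmΛ
      rintro x ⟨t, ht, rfl⟩
      rw [hqdot]
      exact hψmax ht
    -- IVT to get tξ with ψ tξ = ξ
    obtain ⟨tξ, htξu, htξξ⟩ := intermediate_value_uIcc
      (hψcont.continuousOn : ContinuousOn (fun t : ℝ => q2*t^2+q3*t^3) (Set.uIcc tmin tmax))
      (Set.mem_uIcc.2 (Or.inl ⟨hlo, hhi⟩))
    have htξIcc : tξ ∈ Set.Icc a1 a2 := Set.uIcc_subset_Icc htmin htmax htξu
    have htξpos : 0 < tξ := lt_of_lt_of_le ha1 htξIcc.1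
    -- choose η
    have hden : 2*q2+3*q3*tξ ≠ 0 := by
      have he : 2*q2+3*q3*tξ = q3*(2*(q2/q3)+3*tξ) := by
        field_simp
      rw [he]
      exact mul_ne_zero hq3 (by nlinarith)
    set η : ℝ := -(2*c2+3*c3*tξ)/(2*q2+3*q3*tξ) with hη
    set A : ℝ := c2+η*q2 with hA
    set B : ℝ := c3+η*q3 with hB
    have h0 : 2*A + 3*B*tξ = 0 := by
      rw [hA, hB, hη]
      linear_combination div_mul_cancel₀ (-(2*c2+3*c3*tξ)) hden
    have hBpos : 0 < B := by
      have h3 := hABlt η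
      rw [← hA, ← hB] at h3
      nlinarith
    clear_value η A B
    have hstrict : ∀ t : ℝ, 0 < t → t ≠ tξ → A*tξ^2+B*tξ^3 < A*t^2+B*t^3 := by
      intro t htp htne
      have hid : A*t^2+B*t^3 - (A*tξ^2+B*tξ^3)
          = B*(t-tξ)^2*(t+tξ/2) + (2*A+3*B*tξ)*((t^2-tξ^2)/2) := by ring
      rw [h0] at hid
      simp only [zero_mul, add_zero] at hid
      have hsq : 0 < (t-tξ)^2 :=
        lt_of_le_of_ne (sq_nonneg _) (Ne.symm (pow_ne_zero 2 (sub_ne_zero.2 htne)))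
      have hpos : 0 < B*(t-tξ)^2*(t+tξ/2) :=
        mul_pos (mul_pos hBpos hsq) (by linarith : (0:ℝ) < t+tξ/2)
      linarith
    -- φ tξ is the strict minimizer of c+η•q over L
    have hLlb : ∀ x ∈ φ '' Set.Icc a1 a2, (c+η•q) ⬝ᵥ φ tξ ≤ (c+η•q) ⬝ᵥ x := by
      rintro x ⟨t, ht, rfl⟩
      rw [hdot, hdot, ← hA, ← hB]
      rcases eq_or_ne t tξ with h | h
      · rw [h]
      · exact (hstrict t (lt_of_lt_of_le ha1 ht.1) h).le
    have hΛlb : ∀ x ∈ convexHull ℝ (φ '' Set.Icc a1 a2),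
        (c+η•q) ⬝ᵥ φ tξ ≤ (c+η•q) ⬝ᵥ x :=
      hull_lb9 _ _ _ hLlb
    have hexp : ∀ x : Fin 3 → ℝ, (c+η•q) ⬝ᵥ x = c ⬝ᵥ x + η * (q ⬝ᵥ x) := by
      intro x
      rw [add_dotProduct, smul_dotProduct, smul_eq_mul]
    have hφtξS : φ tξ ∈ {mm ∈ convexHull ℝ (φ '' Set.Icc a1 a2) | q ⬝ᵥ mm = ξ} := by
      refine ⟨subset_convexHull ℝ _ (hmem tξ htξIcc), ?_⟩
      rw [hqdot]
      exact htξξ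
    -- equality of values
    have e1 : c ⬝ᵥ m0 ≤ c ⬝ᵥ φ tξ := hminS _ hφtξS
    have e2 : (c+η•q) ⬝ᵥ φ tξ ≤ (c+η•q) ⬝ᵥ m0 := hΛlb m0 hm0.1
    have hqm0 : q ⬝ᵥ m0 = ξ := hm0.2
    have hqφ : q ⬝ᵥ φ tξ = ξ := hφtξS.2
    have e3 : (c+η•q) ⬝ᵥ m0 ≤ (c+η•q) ⬝ᵥ φ tξ := by
      rw [hexp m0, hexp (φ tξ), hqm0, hqφ]
      linarith
    have heq : (c+η•q) ⬝ᵥ m0 = (c+η•q) ⬝ᵥ φ tξ := le_antisymm e3 e2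
    -- representation of m0 as convex combination
    have hm0hull := hm0.1
    rw [convexHull_eq] at hm0hull
    obtain ⟨ι, T, w, z, hw0, hw1, hzL, hcm⟩ := hm0hull
    have hsum : m0 = ∑ i ∈ T, w i • z i := by
      rw [← hcm, Finset.centerMass_eq_of_sum_1 _ _ hw1]
    have hδ : (c+η•q) ⬝ᵥ m0 = ∑ i ∈ T, w i * ((c+η•q) ⬝ᵥ z i) := by
      rw [hsum, dot_sum9]
    have hterm : ∀ i ∈ T, w i * ((c+η•q) ⬝ᵥ φ tξ) ≤ w i * ((c+η•q) ⬝ᵥ z i) := by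
      intro i hi
      exact mul_le_mul_of_nonneg_left (hΛlb (z i) (subset_convexHull ℝ _ (hzL i hi))) (hw0 i hi)
    have hsumeq : ∑ i ∈ T, w i * ((c+η•q) ⬝ᵥ φ tξ) = ∑ i ∈ T, w i * ((c+η•q) ⬝ᵥ z i) := by
      rw [← hδ, ← Finset.sum_mul, hw1, one_mul, heq]
    have hall : ∀ i ∈ T, w i * ((c+η•q) ⬝ᵥ φ tξ) = w i * ((c+η•q) ⬝ᵥ z i) :=
      (Finset.sum_eq_sum_iff_of_le hterm).1 hsumeq
    have hzeq : ∀ i ∈ T, w i ≠ 0 → z i = φ tξ := by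
      intro i hi hwi
      have hvi : (c+η•q) ⬝ᵥ z i = (c+η•q) ⬝ᵥ φ tξ :=
        (mul_left_cancel₀ hwi (hall i hi)).symm
      obtain ⟨t, ht, hzt⟩ := hzL i hi
      rw [← hzt]
      rcases eq_or_ne t tξ with h | h
      · rw [h]
      · exfalso
        have hst := hstrict t (lt_of_lt_of_le ha1 ht.1) h
        rw [← hzt, hdot, hdot, ← hA, ← hB] at hvi
        linarith
    have hm0eq : m0 = φ tξ := by
      rw [hsum]
      have hcg : ∀ i ∈ T, w i • z i = w i • φ tξ := by
        intro i hi
        rcases eq_or_ne (w i) 0 with h | h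
        · rw [h, zero_smul, zero_smul]
        · rw [hzeq i hi h]
      rw [Finset.sum_congr rfl hcg, ← Finset.sum_smul, hw1, one_smul]
    rw [hm0eq]
    exact hmem tξ htξIcc
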